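/- For every nonnegative integer m and positive integer q, the Arakawa–Kaneko zeta value at m+1 satisfies ξ_q(m+1) = Σ_{n=1}^∞ P_m(H_n^{(1)}, ..., H_n^{(m)}) / n^{q+1}. -/

import Mathlib

/-- The modified Bell polynomials, defined by the generating function
`exp (∑_{k≥1} x_k z^k / k) = ∑_{m≥0} P_m(x_1,…,x_m) z^m`, via the
equivalent recursion `(m+1) P_{m+1} = ∑_{k=1}^{m+1} x_k P_{m+1-k}`. -/
noncomputable def modifiedBell (x : ℕ → ℝ) : ℕ → ℝ
  | 0 => 1
  | (m + 1) => ((m : ℝ) + 1)⁻¹ *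
      ∑ k ∈ Finset.range (m + 1), x (k + 1) * modifiedBell x (m - k)
  decreasing_by omega

/-- The polylogarithm `Li_q(z) = ∑_{n≥1} z^n / n^q`. -/
noncomputable def polyLog (q : ℕ) (z : ℝ) : ℝ :=
  ∑' n : ℕ, z ^ (n + 1) / ((n : ℝ) + 1) ^ q

/-- Generalized harmonic number `H_n^{(k)} = ∑_{j=1}^n 1/j^k`. -/
noncomputable def genHarmonic (n k : ℕ) : ℝ :=
  ∑ j ∈ Finset.Icc 1 n, 1 / (j : ℝ) ^ k

/-- The Arakawa–Kaneko zeta function `ξ_q(s)` at `s = m+1`: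
`ξ_q(m+1) = (1/Γ(m+1)) ∫_0^∞ Li_q(1-e^{-t})/(e^t-1) · t^m dt`. -/
noncomputable def arakawaKaneko (q m : ℕ) : ℝ :=
  (1 / Real.Gamma (m + 1)) *
    ∫ t in Set.Ioi (0 : ℝ),
      polyLog q (1 - Real.exp (-t)) / (Real.exp t - 1) * t ^ m


open Finset

noncomputable def altS (n m : ℕ) : ℝ :=
  ∑ k ∈ Finset.range n, (-1:ℝ)^k * (n.choose (k+1)) / ((k:ℝ)+1)^m

lemma lemB (n r : ℕ) :
    ∑ j ∈ Finset.range (n+1), (-1:ℝ)^j * (n.choose j) / ((j:ℝ)+1)^(r+1)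
      = altS (n+1) r / ((n:ℝ)+1) := by
  rw [altS, Finset.sum_div]
  refine Finset.sum_congr rfl fun j hj => ?_
  have h : ((n:ℝ)+1) * (n.choose j) = ((n+1).choose (j+1)) * ((j:ℝ)+1) := by
    exact_mod_cast congrArg (Nat.cast : ℕ → ℝ) (Nat.add_one_mul_choose_eq n j)
  have hj1 : ((j:ℝ)+1) ≠ 0 := by positivity
  have hn1 : ((n:ℝ)+1) ≠ 0 := by positivity
  have hjr : ((j:ℝ)+1)^r ≠ 0 := by positivity
  field_simp
  linear_combination (((j:ℝ)+1)^r) * h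

lemma altS_zero (n : ℕ) : altS (n+1) 0 = 1 := by
  have h0 : ∑ i ∈ Finset.range (n+2), (-1:ℝ)^i * ((n+1).choose i) = 0 := by
    have := Int.alternating_sum_range_choose_of_ne (n := n+1) (by omega)
    exact_mod_cast congrArg (Int.cast : ℤ → ℝ) this
  rw [Finset.sum_range_succ'] at h0
  simp only [pow_succ, pow_zero, Nat.choose_zero_right, Nat.cast_one, one_mul, mul_one] at h0
  have : ∑ i ∈ Finset.range (n+1), (-1:ℝ)^i * ((n+1).choose (i+1)) = 1 := by
    have h1 : ∑ x ∈ Finset.range (n+1), (-1:ℝ)^x * -1 * ((n+1).choose (x+1))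
        = ∑ i ∈ Finset.range (n+1), -((-1:ℝ)^i * ((n+1).choose (i+1))) := by
      refine Finset.sum_congr rfl fun i _ => by ring
    rw [h1, Finset.sum_neg_distrib] at h0
    linarith
  rw [altS]
  simpa [pow_zero] using this

lemma altS_rec (n m : ℕ) :
    altS (n+1) (m+1) = altS n (m+1) + altS (n+1) m / ((n:ℝ)+1) := by
  have expand : altS (n+1) (m+1)
      = ∑ k ∈ Finset.range (n+1),
          ((-1:ℝ)^k * (n.choose (k+1)) / ((k:ℝ)+1)^(m+1)
            + (-1:ℝ)^k * (n.choose k) / ((k:ℝ)+1)^(m+1)) := by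
    rw [altS]
    refine Finset.sum_congr rfl fun k hk => ?_
    have : ((n+1).choose (k+1) : ℝ) = (n.choose k : ℝ) + (n.choose (k+1) : ℝ) := by
      exact_mod_cast congrArg (Nat.cast : ℕ → ℝ) (Nat.choose_succ_succ n k)
    rw [this]; ring
  rw [expand, Finset.sum_add_distrib, lemB n m]
  congr 1
  rw [Finset.sum_range_succ, altS]
  simp [Nat.choose_succ_self]

lemma modifiedBell_zero (x : ℕ → ℝ) : modifiedBell x 0 = 1 := by rw [modifiedBell]

lemma modifiedBell_succ (x : ℕ → ℝ) (m : ℕ) :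
    modifiedBell x (m+1) = ((m : ℝ) + 1)⁻¹ *
      ∑ k ∈ Finset.range (m + 1), x (k + 1) * modifiedBell x (m - k) := by
  rw [modifiedBell]

lemma modifiedBell_nonneg (x : ℕ → ℝ) (hx : ∀ k, 0 ≤ x k) : ∀ m, 0 ≤ modifiedBell x m := by
  intro m
  induction m using Nat.strong_induction_on with
  | _ m ih =>
    cases m with
    | zero => rw [modifiedBell_zero]; norm_num
    | succ m =>
      rw [modifiedBell_succ]
      have : 0 ≤ ∑ k ∈ Finset.range (m + 1), x (k + 1) * modifiedBell x (m - k) := by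
        refine Finset.sum_nonneg fun k hk => mul_nonneg (hx _) (ih _ ?_)
        simp only [Finset.mem_range] at hk; omega
      positivity

lemma modifiedBell_mul (x : ℕ → ℝ) (m : ℕ) :
    (m : ℝ) * modifiedBell x m = ∑ k ∈ Finset.range m, x (k + 1) * modifiedBell x (m - 1 - k) := by
  cases m with
  | zero => simp
  | succ m =>
    rw [modifiedBell_succ]
    push_cast
    rw [mul_inv_cancel_left₀ (by positivity : ((m:ℝ)+1) ≠ 0)]

lemma genHarmonic_zero (k : ℕ) : genHarmonic 0 k = 0 := by simp [genHarmonic]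

lemma genHarmonic_succ (n k : ℕ) :
    genHarmonic (n+1) k = genHarmonic n k + (((n:ℝ)+1)⁻¹)^k := by
  rw [genHarmonic, genHarmonic, Finset.sum_Icc_succ_top (by omega : 1 ≤ n+1)]
  push_cast
  rw [one_div, inv_pow]

lemma genHarmonic_nonneg (n k : ℕ) : 0 ≤ genHarmonic n k := by
  refine Finset.sum_nonneg fun j hj => by positivity

lemma modifiedBell_genHarmonic_zero (m : ℕ) :
    modifiedBell (fun k => genHarmonic 0 k) (m+1) = 0 := by
  rw [modifiedBell_succ]
  rw [Finset.sum_eq_zero fun k _ => by simp [genHarmonic_zero]]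
  simp

lemma P_rec (n : ℕ) : ∀ m : ℕ,
    modifiedBell (fun k => genHarmonic (n+1) k) (m+1)
      = modifiedBell (fun k => genHarmonic n k) (m+1)
        + ((n:ℝ)+1)⁻¹ * modifiedBell (fun k => genHarmonic (n+1) k) m := by
  intro m
  induction m using Nat.strong_induction_on with
  | _ m ih =>
    set a : ℝ := ((n:ℝ)+1)⁻¹ with ha
    set P : ℕ → ℝ := modifiedBell (fun k => genHarmonic (n+1) k) with hPdef
    set Q : ℕ → ℝ := modifiedBell (fun k => genHarmonic n k) with hQdef
    set T : ℝ := ∑ k ∈ Finset.range m, genHarmonic n (k+1) * P (m-1-k) with hTdef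
    set U : ℝ := ∑ k ∈ Finset.range m, a^(k+1) * P (m-1-k) with hUdef
    have hgh : ∀ k, genHarmonic (n+1) k = genHarmonic n k + a^k := fun k => genHarmonic_succ n k
    have hAB : ∑ k ∈ Finset.range (m+1), genHarmonic (n+1) (k+1) * P (m-k)
        = (∑ k ∈ Finset.range (m+1), genHarmonic n (k+1) * P (m-k))
          + ∑ k ∈ Finset.range (m+1), a^(k+1) * P (m-k) := by
      rw [← Finset.sum_add_distrib]
      exact Finset.sum_congr rfl fun k _ => by rw [hgh]; ring
    have hA : ∑ k ∈ Finset.range (m+1), genHarmonic n (k+1) * P (m-k)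
        = (∑ k ∈ Finset.range (m+1), genHarmonic n (k+1) * Q (m-k)) + a * T := by
      rw [Finset.sum_range_succ, Finset.sum_range_succ
        (fun k => genHarmonic n (k+1) * Q (m-k))]
      have hsplit : ∑ k ∈ Finset.range m, genHarmonic n (k+1) * P (m-k)
          = ∑ k ∈ Finset.range m,
              (genHarmonic n (k+1) * Q (m-k) + a * (genHarmonic n (k+1) * P (m-1-k))) := by
        refine Finset.sum_congr rfl fun k hk => ?_
        have hk' : k < m := Finset.mem_range.mp hk
        have e1 : m - k = (m-1-k)+1 := by omega
        have e2 : m-1-k < m := by omega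
        rw [e1, ih _ e2]
        ring
      rw [hsplit, Finset.sum_add_distrib, ← Finset.mul_sum, ← hTdef]
      rw [Nat.sub_self]
      have h0P : P 0 = 1 := modifiedBell_zero _
      have h0Q : Q 0 = 1 := modifiedBell_zero _
      rw [h0P, h0Q]
      ring
    have hB : ∑ k ∈ Finset.range (m+1), a^(k+1) * P (m-k) = a * P m + a * U := by
      rw [Finset.sum_range_succ']
      have h1 : ∑ i ∈ Finset.range m, a^(i+1+1) * P (m-(i+1))
          = a * ∑ j ∈ Finset.range m, a^(j+1) * P (m-1-j) := by
        rw [Finset.mul_sum]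
        refine Finset.sum_congr rfl fun i hi => ?_
        have e : m - (i+1) = m - 1 - i := by omega
        rw [e]; ring
      rw [h1, ← hUdef]
      simp only [Nat.sub_zero, pow_one]
      ring
    have hT : T = (m:ℝ) * P m - U := by
      have hmul := modifiedBell_mul (fun k => genHarmonic (n+1) k) m
      rw [← hPdef] at hmul
      have hsplit : ∑ k ∈ Finset.range m, genHarmonic (n+1) (k+1) * P (m-1-k)
          = T + U := by
        rw [hTdef, hUdef, ← Finset.sum_add_distrib]
        exact Finset.sum_congr rfl fun k _ => by rw [hgh]; ring
      rw [hsplit] at hmul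
      linarith
    have key : ∑ k ∈ Finset.range (m+1), genHarmonic (n+1) (k+1) * P (m-k)
        = (∑ k ∈ Finset.range (m+1), genHarmonic n (k+1) * Q (m-k))
          + ((m:ℝ)+1) * (a * P m) := by
      linear_combination hAB + hA + hB + a * hT
    have hm1 : ((m:ℝ)+1) ≠ 0 := by positivity
    rw [hPdef, hQdef, modifiedBell_succ, modifiedBell_succ, ← hPdef, ← hQdef]
    rw [key, mul_add, inv_mul_cancel_left₀ hm1]

lemma altS_zero' (m : ℕ) : altS 0 m = 0 := by simp [altS]

lemma altS_eq_modifiedBell : ∀ n m : ℕ,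
    altS (n+1) m = modifiedBell (fun k => genHarmonic (n+1) k) m := by
  intro n
  induction n with
  | zero =>
    intro m
    induction m with
    | zero => rw [altS_zero, modifiedBell_zero]
    | succ m ihm =>
      have := altS_rec 0 m
      rw [altS_zero'] at this
      rw [this, ihm, P_rec 0 m, modifiedBell_genHarmonic_zero]
      norm_num
  | succ n ihn =>
    intro m
    induction m with
    | zero => rw [altS_zero, modifiedBell_zero]
    | succ m ihm =>
      have hrec := altS_rec (n+1) m
      rw [hrec, ihn (m+1), ihm, P_rec (n+1) m]
      push_cast
      ring

open MeasureTheory Set Real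

lemma integral_pow_exp (m : ℕ) : ∫ x in Ioi (0:ℝ), x^m * Real.exp (-x) = m.factorial := by
  have h := Real.Gamma_eq_integral (s := (m:ℝ)+1) (by positivity)
  rw [Real.Gamma_nat_eq_factorial] at h
  rw [h]
  refine setIntegral_congr_fun measurableSet_Ioi fun x hx => ?_
  rw [add_sub_cancel_right, Real.rpow_natCast]
  ring

lemma integral_pow_exp_mul (m : ℕ) {c : ℝ} (hc : 0 < c) :
    ∫ t in Ioi (0:ℝ), t^m * Real.exp (-(c*t)) = m.factorial / c^(m+1) := by
  have h2 := MeasureTheory.integral_comp_mul_left_Ioi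
    (fun x => x^m * Real.exp (-x)) 0 hc
  simp only [mul_zero, integral_pow_exp] at h2
  have h3 : ∫ x in Ioi (0:ℝ), (c*x)^m * Real.exp (-(c*x))
      = c^m * ∫ x in Ioi (0:ℝ), x^m * Real.exp (-(c*x)) := by
    rw [← MeasureTheory.integral_const_mul]
    refine setIntegral_congr_fun measurableSet_Ioi fun x hx => ?_
    rw [mul_pow]; ring
  rw [h3] at h2
  have hc0 : c ≠ 0 := hc.ne'
  have hcm : (c:ℝ)^m ≠ 0 := pow_ne_zero _ hc0
  rw [smul_eq_mul] at h2
  field_simp at h2 ⊢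
  rw [pow_succ]
  linarith [h2]

lemma integrableOn_pow_exp (m : ℕ) :
    IntegrableOn (fun t => t^m * Real.exp (-t)) (Ioi (0:ℝ)) := by
  have h := Real.GammaIntegral_convergent (s := (m:ℝ)+1) (by positivity)
  refine h.congr_fun (fun x hx => ?_) measurableSet_Ioi
  beta_reduce
  rw [add_sub_cancel_right, Real.rpow_natCast]
  ring

lemma integrableOn_pow_exp_mul (m : ℕ) {c : ℝ} (hc : 1 ≤ c) :
    IntegrableOn (fun t => t^m * Real.exp (-(c*t))) (Ioi (0:ℝ)) := by
  refine Integrable.mono' (integrableOn_pow_exp m) ?_ ?_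
  · exact (Continuous.aestronglyMeasurable (by continuity)).restrict
  · rw [ae_restrict_iff' measurableSet_Ioi]
    refine Filter.Eventually.of_forall fun t ht => ?_
    have ht0 : (0:ℝ) < t := ht
    rw [Real.norm_eq_abs, abs_mul, abs_pow, abs_of_pos ht0, abs_of_pos (Real.exp_pos _)]
    have : Real.exp (-(c*t)) ≤ Real.exp (-t) := by
      apply Real.exp_le_exp.mpr
      nlinarith
    have hpow : (0:ℝ) ≤ t^m := by positivity
    exact mul_le_mul_of_nonneg_left this hpow

lemma one_sub_pow_expand (x : ℝ) (n : ℕ) :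
    (1-x)^n = ∑ j ∈ Finset.range (n+1), (-1:ℝ)^j * (n.choose j) * x^j := by
  rw [sub_eq_add_neg, add_comm, add_pow]
  refine Finset.sum_congr rfl fun j hj => ?_
  rw [neg_pow]
  ring

lemma integrableOn_bell_term (m n : ℕ) :
    IntegrableOn (fun t => t^m * Real.exp (-t) * (1 - Real.exp (-t))^n) (Ioi (0:ℝ)) := by
  refine Integrable.mono' (integrableOn_pow_exp m) ?_ ?_
  · exact (Continuous.aestronglyMeasurable (by continuity)).restrict
  · rw [ae_restrict_iff' measurableSet_Ioi]
    refine Filter.Eventually.of_forall fun t ht => ?_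
    have ht0 : (0:ℝ) < t := ht
    have he1 : Real.exp (-t) ≤ 1 := Real.exp_le_one_iff.mpr (by linarith)
    have he0 : 0 < Real.exp (-t) := Real.exp_pos _
    have hb0 : (0:ℝ) ≤ 1 - Real.exp (-t) := by linarith
    have hb1 : (1:ℝ) - Real.exp (-t) ≤ 1 := by linarith
    rw [Real.norm_eq_abs, abs_mul, abs_mul, abs_pow, abs_pow, abs_of_pos ht0,
      abs_of_pos he0, abs_of_nonneg hb0]
    have : (1 - Real.exp (-t))^n ≤ 1 := pow_le_one₀ hb0 hb1
    nlinarith [pow_pos ht0 m, Real.exp_pos (-t), pow_nonneg hb0 n,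
      mul_pos (pow_pos ht0 m) he0]

lemma integral_bell_term (m n : ℕ) :
    ∫ t in Ioi (0:ℝ), t^m * Real.exp (-t) * (1 - Real.exp (-t))^n
      = m.factorial * altS (n+1) m / ((n:ℝ)+1) := by
  have hpt : ∀ t : ℝ, t^m * Real.exp (-t) * (1 - Real.exp (-t))^n
      = ∑ j ∈ Finset.range (n+1),
          (-1:ℝ)^j * (n.choose j) * (t^m * Real.exp (-(((j:ℝ)+1)*t))) := by
    intro t
    rw [one_sub_pow_expand, Finset.mul_sum]
    refine Finset.sum_congr rfl fun j hj => ?_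
    have : Real.exp (-t) ^ j * Real.exp (-t) = Real.exp (-(((j:ℝ)+1)*t)) := by
      rw [← Real.exp_nat_mul, ← Real.exp_add]
      congr 1
      ring
    calc t^m * Real.exp (-t) * ((-1:ℝ)^j * (n.choose j) * Real.exp (-t)^j)
        = (-1:ℝ)^j * (n.choose j) * (t^m * (Real.exp (-t)^j * Real.exp (-t))) := by ring
      _ = _ := by rw [this]
  have hint : ∀ j : ℕ, IntegrableOn
      (fun t => (-1:ℝ)^j * (n.choose j) * (t^m * Real.exp (-(((j:ℝ)+1)*t)))) (Ioi (0:ℝ)) := by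
    intro j
    exact (integrableOn_pow_exp_mul m (by push_cast; linarith [Nat.cast_nonneg (α := ℝ) j] :
      (1:ℝ) ≤ (j:ℝ)+1)).const_mul _
  calc ∫ t in Ioi (0:ℝ), t^m * Real.exp (-t) * (1 - Real.exp (-t))^n
      = ∫ t in Ioi (0:ℝ), ∑ j ∈ Finset.range (n+1),
          (-1:ℝ)^j * (n.choose j) * (t^m * Real.exp (-(((j:ℝ)+1)*t))) := by
        exact setIntegral_congr_fun measurableSet_Ioi fun t _ => hpt t
    _ = ∑ j ∈ Finset.range (n+1), ∫ t in Ioi (0:ℝ),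
          (-1:ℝ)^j * (n.choose j) * (t^m * Real.exp (-(((j:ℝ)+1)*t))) := by
        exact integral_finset_sum _ fun j _ => hint j
    _ = ∑ j ∈ Finset.range (n+1),
          (-1:ℝ)^j * (n.choose j) * (m.factorial / ((j:ℝ)+1)^(m+1)) := by
        refine Finset.sum_congr rfl fun j hj => ?_
        rw [MeasureTheory.integral_const_mul,
          integral_pow_exp_mul m (by positivity : (0:ℝ) < (j:ℝ)+1)]
    _ = m.factorial * ∑ j ∈ Finset.range (n+1),
          (-1:ℝ)^j * (n.choose j) / ((j:ℝ)+1)^(m+1) := by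
        rw [Finset.mul_sum]
        exact Finset.sum_congr rfl fun j hj => by ring
    _ = m.factorial * altS (n+1) m / ((n:ℝ)+1) := by
        rw [lemB n m]
        ring

theorem arakawaKaneko_eq_sum (m q : ℕ) (hq : 0 < q) :
    arakawaKaneko q m =
      ∑' n : ℕ, modifiedBell (fun k => genHarmonic (n + 1) k) m / ((n : ℝ) + 1) ^ (q + 1) := by
  classical
  set g : ℕ → ℝ → ℝ := fun n t =>
    t^m * Real.exp (-t) * (1 - Real.exp (-t))^n / ((n:ℝ)+1)^q with hg
  set c : ℕ → ℝ := fun n =>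
    (m.factorial : ℝ) * (modifiedBell (fun k => genHarmonic (n + 1) k) m / ((n:ℝ)+1)^(q+1))
    with hc
  set A : ℝ → ℝ := fun t => polyLog q (1 - Real.exp (-t)) / (Real.exp t - 1) * t ^ m with hA
  -- basic facts about t > 0
  have hfacts : ∀ t : ℝ, t ∈ Ioi (0:ℝ) →
      0 < Real.exp (-t) ∧ Real.exp (-t) < 1 ∧ 1 < Real.exp t := by
    intro t ht
    have ht0 : (0:ℝ) < t := ht
    refine ⟨Real.exp_pos _, ?_, ?_⟩
    · rw [← Real.exp_zero]; exact Real.exp_lt_exp.mpr (by linarith)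
    · rw [← Real.exp_zero]; exact Real.exp_lt_exp.mpr ht0
  -- pointwise expansion
  have hpoint : ∀ t ∈ Ioi (0:ℝ), A t = ∑' n, g n t := by
    intro t ht
    obtain ⟨he0, he1, het⟩ := hfacts t ht
    simp only [hA, polyLog]
    rw [← tsum_div_const, ← tsum_mul_right]
    refine tsum_congr fun n => ?_
    have h1 : Real.exp t * Real.exp (-t) = 1 := by
      rw [← Real.exp_add]; simp
    have hd : Real.exp t - 1 ≠ 0 := by linarith
    have hnq : ((n:ℝ)+1)^q ≠ 0 := by positivity
    have hexp : (1 - Real.exp (-t)) / (Real.exp t - 1) = Real.exp (-t) := by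
      rw [div_eq_iff hd]; linear_combination -h1
    show (1 - Real.exp (-t)) ^ (n+1) / ((n:ℝ)+1)^q / (Real.exp t - 1) * t^m
        = t^m * Real.exp (-t) * (1 - Real.exp (-t))^n / ((n:ℝ)+1)^q
    have hstep : (1 - Real.exp (-t)) ^ (n+1) / ((n:ℝ)+1)^q / (Real.exp t - 1) * t^m
        = t^m * ((1 - Real.exp (-t)) / (Real.exp t - 1)) * (1 - Real.exp (-t))^n
          / ((n:ℝ)+1)^q := by
      field_simp
      ring
    rw [hstep, hexp]
  -- summability pointwise
  have hsummable : ∀ t ∈ Ioi (0:ℝ), Summable (fun n => g n t) := by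
    intro t ht
    obtain ⟨he0, he1, het⟩ := hfacts t ht
    have ht0 : (0:ℝ) < t := ht
    have hr0 : (0:ℝ) ≤ 1 - Real.exp (-t) := by linarith
    have hr1 : 1 - Real.exp (-t) < 1 := by linarith
    refine Summable.of_nonneg_of_le (fun n => ?_) (fun n => ?_)
      (((summable_geometric_of_lt_one hr0 hr1).mul_left (t^m * Real.exp (-t))))
    · rw [hg]; positivity
    · rw [hg]
      simp only []
      rw [div_le_iff₀ (by positivity : (0:ℝ) < ((n:ℝ)+1)^q)]
      have h1 : (1:ℝ) ≤ ((n:ℝ)+1)^q := one_le_pow₀ (by linarith [Nat.cast_nonneg (α := ℝ) n])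
      nlinarith [mul_nonneg (mul_nonneg (le_of_lt (pow_pos ht0 m)) he0.le) (pow_nonneg hr0 n)]
  have hg_nonneg : ∀ n, ∀ t ∈ Ioi (0:ℝ), 0 ≤ g n t := by
    intro n t ht
    obtain ⟨he0, he1, het⟩ := hfacts t ht
    have ht0 : (0:ℝ) < t := ht
    have hr0 : (0:ℝ) ≤ 1 - Real.exp (-t) := by linarith
    rw [hg]; positivity
  have hg_cont : ∀ n, Continuous (g n) := by
    intro n; rw [hg]; continuity
  have hg_int : ∀ n, IntegrableOn (g n) (Ioi (0:ℝ)) := by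
    intro n
    exact (integrableOn_bell_term m n).div_const _
  have hg_val : ∀ n, ∫ t in Ioi (0:ℝ), g n t = c n := by
    intro n
    rw [hg]
    simp only []
    rw [integral_div, integral_bell_term m n, altS_eq_modifiedBell n m]
    show (m.factorial:ℝ) * modifiedBell (fun k => genHarmonic (n + 1) k) m / ((n:ℝ)+1)
          / ((n:ℝ)+1)^q
        = (m.factorial:ℝ) * (modifiedBell (fun k => genHarmonic (n + 1) k) m / ((n:ℝ)+1)^(q+1))
    have hne : ((n:ℝ)+1) ≠ 0 := by positivity
    have hne2 : ((n:ℝ)+1)^q ≠ 0 := by positivity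
    rw [pow_succ]
    field_simp
  have hc_nonneg : ∀ n, 0 ≤ c n := by
    intro n
    rw [hc]
    have := modifiedBell_nonneg (fun k => genHarmonic (n + 1) k)
      (fun k => genHarmonic_nonneg _ _) m
    positivity
  -- measurable version
  set G : ℝ → ℝ := fun t => (∑' n, ENNReal.ofReal (g n t)).toReal with hG
  have hGmeas : Measurable G := by
    apply Measurable.ennreal_toReal
    exact Measurable.ennreal_tsum fun n => ((hg_cont n).measurable).ennreal_ofReal
  have hAG : ∀ t ∈ Ioi (0:ℝ), A t = G t := by
    intro t ht
    rw [hpoint t ht]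
    simp only [hG]
    rw [← ENNReal.ofReal_tsum_of_nonneg (hg_nonneg · t ht) (hsummable t ht)]
    rw [ENNReal.toReal_ofReal (tsum_nonneg (hg_nonneg · t ht))]
  have hae : A =ᵐ[volume.restrict (Ioi (0:ℝ))] G :=
    (ae_restrict_iff' measurableSet_Ioi).mpr (Filter.Eventually.of_forall hAG)
  have hAmeas : AEStronglyMeasurable A (volume.restrict (Ioi (0:ℝ))) :=
    (hGmeas.aestronglyMeasurable).congr hae.symm
  have hA_nonneg : 0 ≤ᵐ[volume.restrict (Ioi (0:ℝ))] A := by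
    refine (ae_restrict_iff' measurableSet_Ioi).mpr (Filter.Eventually.of_forall fun t ht => ?_)
    rw [hpoint t ht]
    exact tsum_nonneg (hg_nonneg · t ht)
  -- the integral equals the sum
  have hmain : ∫ t in Ioi (0:ℝ), A t = ∑' n, c n := by
    rw [integral_eq_lintegral_of_nonneg_ae hA_nonneg hAmeas]
    have hl1 : ∫⁻ t in Ioi (0:ℝ), ENNReal.ofReal (A t)
        = ∫⁻ t in Ioi (0:ℝ), ∑' n, ENNReal.ofReal (g n t) := by
      refine lintegral_congr_ae ((ae_restrict_iff' measurableSet_Ioi).mpr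
        (Filter.Eventually.of_forall fun t ht => ?_))
      beta_reduce
      rw [hpoint t ht, ENNReal.ofReal_tsum_of_nonneg (hg_nonneg · t ht) (hsummable t ht)]
    rw [hl1, lintegral_tsum fun n => (((hg_cont n).measurable).ennreal_ofReal).aemeasurable]
    have hl2 : ∀ n, ∫⁻ t in Ioi (0:ℝ), ENNReal.ofReal (g n t) = ENNReal.ofReal (c n) := by
      intro n
      rw [← ofReal_integral_eq_lintegral_ofReal (hg_int n)
        ((ae_restrict_iff' measurableSet_Ioi).mpr
          (Filter.Eventually.of_forall fun t ht => hg_nonneg n t ht))]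
      rw [hg_val n]
    rw [tsum_congr hl2, ENNReal.tsum_toReal_eq fun n => ENNReal.ofReal_ne_top]
    exact tsum_congr fun n => ENNReal.toReal_ofReal (hc_nonneg n)
  -- finish
  rw [arakawaKaneko]
  have hGamma : Real.Gamma ((m:ℝ) + 1) = (m.factorial : ℝ) := Real.Gamma_nat_eq_factorial m
  rw [hGamma]
  have : (∫ t in Set.Ioi (0:ℝ), polyLog q (1 - Real.exp (-t)) / (Real.exp t - 1) * t ^ m)
      = ∑' n, c n := hmain
  rw [this, hc, tsum_mul_left]
  have hm0 : (m.factorial : ℝ) ≠ 0 := by exact_mod_cast m.factorial_ne_zero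
  field_simp
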